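/- Let f : Λ → ℝ be bounded below with Δ_f := f(λ₀) − inf f < ∞, L-smooth on closed convex Λ, and suppose the sequence (λ_s) is generated by λ_{s+1} = P_Λ(λ_s − α ĝ_s) with α ≤ 1/L and random gradient estimates ĝ_s satisfying E[‖ĝ_s − ∇f(λ_s)‖²] ≤ C/(c₃(s+1)) for constants C, c₃ > 0. Then for every S ≥ 1, (1/S) Σ_{s=0}^{S−1} E[‖G_α(λ_s)‖²] ≤ (1/(Sα)) [8Δ_f + (10/L)(C/c₃)(log S + 1)]. -/

import Mathlib

open MeasureTheory
open scoped BigOperators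

noncomputable section

section Aux
open MeasureTheory RealInnerProductSpace
noncomputable section
variable {F : Type*} [NormedAddCommGroup F] [InnerProductSpace ℝ F] [CompleteSpace F]

lemma proj_inner {Λ : Set F} (hΛconv : Convex ℝ Λ)
    {P : F → F} (hP : ∀ x, P x ∈ Λ ∧ ∀ y ∈ Λ, ‖x - P x‖ ≤ ‖x - y‖)
    (x : F) {y : F} (hy : y ∈ Λ) : ⟪x - P x, y - P x⟫ ≤ 0 := by
  have : Nonempty Λ := ⟨⟨P x, (hP x).1⟩⟩
  have hinf : ‖x - P x‖ = ⨅ w : Λ, ‖x - (w : F)‖ :=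
    le_antisymm (le_ciInf fun w => (hP x).2 w w.2)
      (ciInf_le ⟨0, by rintro _ ⟨w, rfl⟩; exact norm_nonneg _⟩ (⟨P x, (hP x).1⟩ : Λ))
  exact (norm_eq_iInf_iff_real_inner_le_zero hΛconv (hP x).1).1 hinf y hy

lemma proj_nonexp {Λ : Set F} (hΛconv : Convex ℝ Λ)
    {P : F → F} (hP : ∀ x, P x ∈ Λ ∧ ∀ y ∈ Λ, ‖x - P x‖ ≤ ‖x - y‖)
    (x y : F) : ‖P x - P y‖ ≤ ‖x - y‖ := by
  have h1 : ⟪x - P x, P y - P x⟫ ≤ 0 := proj_inner hΛconv hP x (hP y).1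
  have h2 : ⟪y - P y, P x - P y⟫ ≤ 0 := proj_inner hΛconv hP y (hP x).1
  have key : ‖P x - P y‖ ^ 2 ≤ ⟪x - y, P x - P y⟫ := by
    have e : ⟪x - y, P x - P y⟫ - ‖P x - P y‖ ^ 2
        = -⟪x - P x, P y - P x⟫ - ⟪y - P y, P x - P y⟫ := by
      rw [← real_inner_self_eq_norm_sq]
      simp only [inner_sub_left, inner_sub_right, real_inner_comm (P x)]
      ring
    nlinarith [e]
  have hub : ⟪x - y, P x - P y⟫ ≤ ‖x - y‖ * ‖P x - P y‖ := real_inner_le_norm _ _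
  nlinarith [norm_nonneg (P x - P y), norm_nonneg (x - y)]

lemma descent_lemma {Λ : Set F} (hΛconv : Convex ℝ Λ)
    {f : F → ℝ} {f' : F → F} (hgrad : ∀ x, HasGradientAt f (f' x) x)
    {L : NNReal} (hsmooth : LipschitzOnWith L f' Λ)
    {x y : F} (hx : x ∈ Λ) (hy : y ∈ Λ) :
    f y ≤ f x + ⟪f' x, y - x⟫ + (L : ℝ) / 2 * ‖y - x‖ ^ 2 := by
  set v := y - x with hv
  set φ : ℝ → ℝ := fun t => f (x + t • v) - t * ⟪f' x, v⟫ - (L : ℝ) / 2 * t ^ 2 * ‖v‖ ^ 2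
    with hφ
  have hz : ∀ t : ℝ, t ∈ Set.Icc (0:ℝ) 1 → x + t • v ∈ Λ := fun t ht =>
    hΛconv.add_smul_sub_mem hx hy ht
  have hderiv : ∀ t : ℝ, HasDerivAt φ
      (⟪f' (x + t • v), v⟫ - ⟪f' x, v⟫ - (L : ℝ) * t * ‖v‖ ^ 2) t := by
    intro t
    have hc : HasDerivAt (fun t : ℝ => x + t • v) v t := by
      simpa using ((hasDerivAt_id t).smul_const v).const_add x
    have h1 : HasDerivAt (fun t : ℝ => f (x + t • v)) ⟪f' (x + t • v), v⟫ t := by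
      have := (hgrad (x + t • v)).hasFDerivAt.comp_hasDerivAt t hc
      simp only [InnerProductSpace.toDual_apply_apply] at this
      exact this
    have h2 : HasDerivAt (fun t : ℝ => t * ⟪f' x, v⟫) ⟪f' x, v⟫ t := by
      simpa using (hasDerivAt_id t).mul_const (⟪f' x, v⟫)
    have h3 : HasDerivAt (fun t : ℝ => (L : ℝ) / 2 * t ^ 2 * ‖v‖ ^ 2)
        ((L : ℝ) * t * ‖v‖ ^ 2) t := by
      have := ((hasDerivAt_pow 2 t).const_mul ((L : ℝ) / 2)).mul_const (‖v‖ ^ 2)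
      exact this.congr_deriv (by ring)
    exact (h1.sub h2).sub h3
  have hanti : AntitoneOn φ (Set.Icc (0:ℝ) 1) := by
    apply antitoneOn_of_deriv_nonpos (convex_Icc 0 1)
    · exact fun t _ => (hderiv t).differentiableAt.continuousAt.continuousWithinAt
    · intro t ht
      exact (hderiv t).differentiableAt.differentiableWithinAt
    · intro t ht
      rw [interior_Icc] at ht
      rw [(hderiv t).deriv]
      have hmem : x + t • v ∈ Λ := hz t ⟨le_of_lt ht.1, le_of_lt ht.2⟩
      have hlip : ‖f' (x + t • v) - f' x‖ ≤ (L : ℝ) * ‖t • v‖ := by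
        have := hsmooth.dist_le_mul (x + t • v) hmem x hx
        simpa [dist_eq_norm] using this
      have hip : ⟪f' (x + t • v) - f' x, v⟫ ≤ ‖f' (x + t • v) - f' x‖ * ‖v‖ :=
        real_inner_le_norm _ _
      have h4 : ⟪f' (x + t • v), v⟫ - ⟪f' x, v⟫ = ⟪f' (x + t • v) - f' x, v⟫ := by
        rw [inner_sub_left]
      rw [h4]
      have hnt : ‖t • v‖ = t * ‖v‖ := by
        rw [norm_smul, Real.norm_eq_abs, abs_of_pos ht.1]
      rw [hnt] at hlip
      have h5 : ‖f' (x + t • v) - f' x‖ * ‖v‖ ≤ (L : ℝ) * (t * ‖v‖) * ‖v‖ :=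
        mul_le_mul_of_nonneg_right hlip (norm_nonneg v)
      nlinarith [h5, hip]
  have := hanti (Set.left_mem_Icc.2 zero_le_one) (Set.right_mem_Icc.2 zero_le_one) zero_le_one
  simp only [hφ] at this
  simp only [one_smul, zero_smul, add_zero, zero_mul, sub_zero, one_pow, mul_one,
    add_sub_cancel] at this
  have hxy : x + v = y := by simp [hv]
  rw [hxy] at this
  linarith

lemma step_lemma {Λ : Set F} (hΛconv : Convex ℝ Λ)
    {f : F → ℝ} {f' : F → F} (hgrad : ∀ x, HasGradientAt f (f' x) x)
    {L : NNReal} (hL : (0:ℝ) < L) (hsmooth : LipschitzOnWith L f' Λ)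
    {P : F → F} (hP : ∀ x, P x ∈ Λ ∧ ∀ y ∈ Λ, ‖x - P x‖ ≤ ‖x - y‖)
    {α : ℝ} (hα0 : 0 < α) (hα : α ≤ 1 / L)
    {x : F} (hx : x ∈ Λ) (gg : F) :
    ‖α⁻¹ • (x - P (x - α • f' x))‖ ^ 2
      ≤ 8 / α * (f x - f (P (x - α • gg))) + 10 * ‖gg - f' x‖ ^ 2 := by
  set xp := P (x - α • gg) with hxp
  set d := x - xp with hd
  set δ := gg - f' x with hδ
  have hxpΛ : xp ∈ Λ := (hP _).1
  have hLα : (L : ℝ) * α ≤ 1 := by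
    rw [le_div_iff₀ hL] at hα; linarith
  -- projection variational inequality at point x - α • gg, test point x
  have hvar : ⟪(x - α • gg) - xp, x - xp⟫ ≤ 0 := proj_inner hΛconv hP _ hx
  have hinner : ‖d‖ ^ 2 ≤ α * ⟪gg, d⟫ := by
    have e : ⟪(x - α • gg) - xp, x - xp⟫ = ‖d‖ ^ 2 - α * ⟪gg, d⟫ := by
      have : (x - α • gg) - xp = d - α • gg := by rw [hd]; abel
      rw [this, ← hd, inner_sub_left, real_inner_smul_left, real_inner_self_eq_norm_sq]
    linarith [e ▸ hvar]
  -- descent lemma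
  have hdesc : f xp ≤ f x + ⟪f' x, xp - x⟫ + (L : ℝ) / 2 * ‖xp - x‖ ^ 2 :=
    descent_lemma hΛconv hgrad hsmooth hx hxpΛ
  have hipd : ⟪f' x, xp - x⟫ = -⟪gg, d⟫ + ⟪δ, d⟫ := by
    have h1 : xp - x = -d := by rw [hd]; abel
    rw [h1, inner_neg_right, hδ, inner_sub_left]
    ring
  have hnrev : ‖xp - x‖ = ‖d‖ := by rw [hd, norm_sub_rev]
  have hδd : ⟪δ, d⟫ ≤ ‖δ‖ * ‖d‖ := real_inner_le_norm _ _
  have hL2 : (L : ℝ) / 2 * ‖d‖ ^ 2 ≤ ‖d‖ ^ 2 / (2 * α) := by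
    rw [← sub_nonneg]
    have e : ‖d‖ ^ 2 / (2 * α) - (L : ℝ) / 2 * ‖d‖ ^ 2
        = (1 - (L : ℝ) * α) * ‖d‖ ^ 2 / (2 * α) := by field_simp
    rw [e]
    exact div_nonneg (mul_nonneg (by linarith) (sq_nonneg _)) (by positivity)
  -- f xp ≤ f x - ‖d‖²/(2α) + ‖δ‖‖d‖
  have key1 : ‖d‖ ^ 2 / (4 * α) ≤ f x - f xp + α * ‖δ‖ ^ 2 := by
    have hgd : ⟪gg, d⟫ ≥ ‖d‖ ^ 2 / α := by
      rw [ge_iff_le, div_le_iff₀ hα0]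
      nlinarith [hinner]
    have hamgm : ‖δ‖ * ‖d‖ ≤ α * ‖δ‖ ^ 2 + ‖d‖ ^ 2 / (4 * α) := by
      rw [← sub_nonneg]
      have h := sq_nonneg (‖d‖ - 2 * α * ‖δ‖)
      have : α * ‖δ‖ ^ 2 + ‖d‖ ^ 2 / (4 * α) - ‖δ‖ * ‖d‖
          = (‖d‖ - 2 * α * ‖δ‖) ^ 2 / (4 * α) := by field_simp; ring
      rw [this]; positivity
    have h2a : ‖d‖ ^ 2 / α = ‖d‖ ^ 2 / (2 * α) + ‖d‖ ^ 2 / (2 * α) := by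
      field_simp; ring
    have h2b : ‖d‖ ^ 2 / (2 * α) = ‖d‖ ^ 2 / (4 * α) + ‖d‖ ^ 2 / (4 * α) := by
      field_simp; ring
    rw [hnrev] at hdesc
    linarith [hdesc, hipd ▸ hdesc]
  -- comparison of gradient mappings
  have hGdiff : ‖α⁻¹ • (x - P (x - α • f' x)) - α⁻¹ • d‖ ≤ ‖δ‖ := by
    have e : α⁻¹ • (x - P (x - α • f' x)) - α⁻¹ • d = α⁻¹ • (xp - P (x - α • f' x)) := by
      rw [← smul_sub, hd]; congr 1; abel
    rw [e, norm_smul, Real.norm_eq_abs, abs_of_pos (by positivity)]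
    have hne : ‖xp - P (x - α • f' x)‖ ≤ ‖(x - α • gg) - (x - α • f' x)‖ :=
      proj_nonexp hΛconv hP _ _
    have e2 : (x - α • gg) - (x - α • f' x) = -(α • δ) := by rw [hδ, smul_sub]; abel
    rw [e2, norm_neg, norm_smul, Real.norm_eq_abs, abs_of_pos hα0] at hne
    calc α⁻¹ * ‖xp - P (x - α • f' x)‖ ≤ α⁻¹ * (α * ‖δ‖) :=
          mul_le_mul_of_nonneg_left hne (by positivity)
      _ = ‖δ‖ := by field_simp
  have hGle : ‖α⁻¹ • (x - P (x - α • f' x))‖ ≤ ‖α⁻¹ • d‖ + ‖δ‖ := by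
    calc ‖α⁻¹ • (x - P (x - α • f' x))‖
        = ‖(α⁻¹ • (x - P (x - α • f' x)) - α⁻¹ • d) + α⁻¹ • d‖ := by
          congr 1; abel
      _ ≤ ‖α⁻¹ • (x - P (x - α • f' x)) - α⁻¹ • d‖ + ‖α⁻¹ • d‖ := norm_add_le _ _
      _ ≤ ‖α⁻¹ • d‖ + ‖δ‖ := by linarith [hGdiff]
  have hnd : ‖α⁻¹ • d‖ = α⁻¹ * ‖d‖ := by
    rw [norm_smul, Real.norm_eq_abs, abs_of_pos (by positivity)]
  have hG2 : ‖α⁻¹ • (x - P (x - α • f' x))‖ ^ 2 ≤ 2 * (α⁻¹ * ‖d‖) ^ 2 + 2 * ‖δ‖ ^ 2 := by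
    rw [hnd] at hGle
    nlinarith [norm_nonneg (α⁻¹ • (x - P (x - α • f' x))), sq_nonneg (α⁻¹ * ‖d‖ - ‖δ‖),
      norm_nonneg d, norm_nonneg δ, hGle]
  have hd2 : (α⁻¹ * ‖d‖) ^ 2 ≤ 4 / α * (f x - f xp) + 4 * ‖δ‖ ^ 2 := by
    have : (α⁻¹ * ‖d‖) ^ 2 = (4 / α) * (‖d‖ ^ 2 / (4 * α)) := by
      field_simp
    rw [this]
    have h4α : (0:ℝ) ≤ 4 / α := by positivity
    calc (4 / α) * (‖d‖ ^ 2 / (4 * α)) ≤ (4 / α) * (f x - f xp + α * ‖δ‖ ^ 2) :=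
          mul_le_mul_of_nonneg_left key1 h4α
      _ = 4 / α * (f x - f xp) + 4 * ‖δ‖ ^ 2 := by field_simp
  calc ‖α⁻¹ • (x - P (x - α • f' x))‖ ^ 2
      ≤ 2 * (α⁻¹ * ‖d‖) ^ 2 + 2 * ‖δ‖ ^ 2 := hG2
    _ ≤ 2 * (4 / α * (f x - f xp) + 4 * ‖δ‖ ^ 2) + 2 * ‖δ‖ ^ 2 := by linarith [hd2]
    _ = 8 / α * (f x - f xp) + 10 * ‖δ‖ ^ 2 := by ring

end

end Aux

/-- Stochastic projected inexact gradient descent with MSE `≤ C/(c₃(s+1))`: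
`(1/S) Σ E‖G_α(λ_s)‖² ≤ (1/(Sα)) [8Δ_f + (10/L)(C/c₃)(log S + 1)]`. -/
theorem stmt19 {Ω : Type*} [MeasurableSpace Ω] (μ : Measure Ω) [IsProbabilityMeasure μ]
    {m : ℕ} (Λ : Set (EuclideanSpace ℝ (Fin m)))
    (hΛne : Λ.Nonempty) (hΛc : IsClosed Λ) (hΛconv : Convex ℝ Λ)
    (f : EuclideanSpace ℝ (Fin m) → ℝ)
    (f' : EuclideanSpace ℝ (Fin m) → EuclideanSpace ℝ (Fin m))
    (hgrad : ∀ x, HasGradientAt f (f' x) x)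
    (L : NNReal) (hL : (0 : ℝ) < L) (hsmooth : LipschitzOnWith L f' Λ)
    (hbdd : BddBelow (Set.range f))
    (P : EuclideanSpace ℝ (Fin m) → EuclideanSpace ℝ (Fin m))
    (hP : ∀ x, P x ∈ Λ ∧ ∀ y ∈ Λ, ‖x - P x‖ ≤ ‖x - y‖)
    (α : ℝ) (hα0 : 0 < α) (hα : α ≤ 1 / L)
    (C c₃ : ℝ) (hC : 0 < C) (hc₃ : 0 < c₃)
    (lam₀ : EuclideanSpace ℝ (Fin m)) (hlam₀ : lam₀ ∈ Λ)
    (lam g : ℕ → Ω → EuclideanSpace ℝ (Fin m))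
    (hlam0 : ∀ ω, lam 0 ω = lam₀)
    (hrec : ∀ s ω, lam (s + 1) ω = P (lam s ω - α • g s ω))
    (hmeasG : ∀ s, AEStronglyMeasurable
      (fun ω => ‖(α)⁻¹ • (lam s ω - P (lam s ω - α • f' (lam s ω)))‖ ^ 2) μ)
    (hδint : ∀ s, Integrable (fun ω => ‖g s ω - f' (lam s ω)‖ ^ 2) μ)
    (hMSE : ∀ s : ℕ, ∫ ω, ‖g s ω - f' (lam s ω)‖ ^ 2 ∂μ ≤ C / (c₃ * ((s : ℝ) + 1))) :
    ∀ S : ℕ, 1 ≤ S →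
      (1 / (S : ℝ)) * ∑ s ∈ Finset.range S,
          ∫ ω, ‖(α)⁻¹ • (lam s ω - P (lam s ω - α • f' (lam s ω)))‖ ^ 2 ∂μ
        ≤ (1 / ((S : ℝ) * α)) *
            (8 * (f lam₀ - ⨅ x, f x)
              + (10 / L) * (C / c₃) * (Real.log S + 1)) := by
  intro S hS
  have hmem : ∀ s, ∀ ω, lam s ω ∈ Λ := by
    intro s
    induction s with
    | zero => intro ω; rw [hlam0]; exact hlam₀
    | succ n ih => intro ω; rw [hrec]; exact (hP _).1
  have hΔ0 : ⨅ x, f x ≤ f lam₀ := ciInf_le hbdd lam₀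
  set Δ : ℝ := f lam₀ - ⨅ x, f x with hΔdef
  have hΔnn : 0 ≤ Δ := by simp [hΔdef]; linarith
  -- pointwise one-step bound
  have hstep : ∀ s ω, ‖(α)⁻¹ • (lam s ω - P (lam s ω - α • f' (lam s ω)))‖ ^ 2
      ≤ 8 / α * (f (lam s ω) - f (lam (s + 1) ω)) + 10 * ‖g s ω - f' (lam s ω)‖ ^ 2 := by
    intro s ω
    rw [hrec]
    exact step_lemma hΛconv hgrad hL hsmooth hP hα0 hα (hmem s ω) (g s ω)
  -- pointwise summed bound
  set B : Ω → ℝ := fun ω => 8 / α * Δ + 10 * ∑ s ∈ Finset.range S,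
    ‖g s ω - f' (lam s ω)‖ ^ 2 with hBdef
  have hsumle : ∀ ω, (∑ s ∈ Finset.range S,
      ‖(α)⁻¹ • (lam s ω - P (lam s ω - α • f' (lam s ω)))‖ ^ 2) ≤ B ω := by
    intro ω
    calc (∑ s ∈ Finset.range S, ‖(α)⁻¹ • (lam s ω - P (lam s ω - α • f' (lam s ω)))‖ ^ 2)
        ≤ ∑ s ∈ Finset.range S, (8 / α * (f (lam s ω) - f (lam (s + 1) ω))
            + 10 * ‖g s ω - f' (lam s ω)‖ ^ 2) :=
          Finset.sum_le_sum fun s _ => hstep s ω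
      _ = 8 / α * (f (lam 0 ω) - f (lam S ω))
            + 10 * ∑ s ∈ Finset.range S, ‖g s ω - f' (lam s ω)‖ ^ 2 := by
          rw [Finset.sum_add_distrib, ← Finset.mul_sum, ← Finset.mul_sum,
            Finset.sum_range_sub' (fun s => f (lam s ω))]
      _ ≤ B ω := by
          have h1 : ⨅ x, f x ≤ f (lam S ω) := ciInf_le hbdd (lam S ω)
          have h2 : f (lam 0 ω) - f (lam S ω) ≤ Δ := by
            rw [hlam0, hΔdef]; linarith
          have h3 : 8 / α * (f (lam 0 ω) - f (lam S ω)) ≤ 8 / α * Δ :=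
            mul_le_mul_of_nonneg_left h2 (by positivity)
          simp only [hBdef]
          linarith
  -- integrability
  have hBint : Integrable B μ := by
    apply Integrable.add (integrable_const _)
    exact (integrable_finset_sum _ fun s _ => hδint s).const_mul 10
  have hGint : ∀ s ∈ Finset.range S, Integrable
      (fun ω => ‖(α)⁻¹ • (lam s ω - P (lam s ω - α • f' (lam s ω)))‖ ^ 2) μ := by
    intro s hs
    apply Integrable.mono' hBint (hmeasG s)
    filter_upwards with ω
    rw [Real.norm_eq_abs, abs_of_nonneg (by positivity)]
    calc ‖(α)⁻¹ • (lam s ω - P (lam s ω - α • f' (lam s ω)))‖ ^ 2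
        ≤ ∑ s' ∈ Finset.range S,
            ‖(α)⁻¹ • (lam s' ω - P (lam s' ω - α • f' (lam s' ω)))‖ ^ 2 :=
          Finset.single_le_sum
            (f := fun s' => ‖(α)⁻¹ • (lam s' ω - P (lam s' ω - α • f' (lam s' ω)))‖ ^ 2)
            (fun i _ => by positivity) hs
      _ ≤ B ω := hsumle ω
  -- integral bound
  have hmain : (∑ s ∈ Finset.range S,
      ∫ ω, ‖(α)⁻¹ • (lam s ω - P (lam s ω - α • f' (lam s ω)))‖ ^ 2 ∂μ)
      ≤ 8 / α * Δ + 10 * ∑ s ∈ Finset.range S, ∫ ω, ‖g s ω - f' (lam s ω)‖ ^ 2 ∂μ := by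
    calc (∑ s ∈ Finset.range S,
        ∫ ω, ‖(α)⁻¹ • (lam s ω - P (lam s ω - α • f' (lam s ω)))‖ ^ 2 ∂μ)
        = ∫ ω, ∑ s ∈ Finset.range S,
            ‖(α)⁻¹ • (lam s ω - P (lam s ω - α • f' (lam s ω)))‖ ^ 2 ∂μ :=
          (integral_finset_sum _ hGint).symm
      _ ≤ ∫ ω, B ω ∂μ :=
          integral_mono (integrable_finset_sum _ hGint) hBint hsumle
      _ = 8 / α * Δ + 10 * ∑ s ∈ Finset.range S, ∫ ω, ‖g s ω - f' (lam s ω)‖ ^ 2 ∂μ := by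
          simp only [hBdef]
          rw [integral_add (integrable_const _)
            ((integrable_finset_sum _ fun s _ => hδint s).const_mul 10),
            integral_const, integral_const_mul,
            integral_finset_sum _ fun s _ => hδint s]
          simp
  -- harmonic sum bound
  have hharm : (∑ s ∈ Finset.range S, ∫ ω, ‖g s ω - f' (lam s ω)‖ ^ 2 ∂μ)
      ≤ C / c₃ * (Real.log S + 1) := by
    calc (∑ s ∈ Finset.range S, ∫ ω, ‖g s ω - f' (lam s ω)‖ ^ 2 ∂μ)
        ≤ ∑ s ∈ Finset.range S, C / (c₃ * ((s : ℝ) + 1)) :=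
          Finset.sum_le_sum fun s _ => hMSE s
      _ = C / c₃ * ∑ s ∈ Finset.range S, ((s : ℝ) + 1)⁻¹ := by
          rw [Finset.mul_sum]
          exact Finset.sum_congr rfl fun s _ => by
            rw [div_mul_eq_div_div]
            rw [div_eq_mul_inv (C / c₃)]
      _ ≤ C / c₃ * (Real.log S + 1) := by
          apply mul_le_mul_of_nonneg_left _ (by positivity)
          have h1 : ((harmonic S : ℚ) : ℝ) ≤ 1 + Real.log S := harmonic_le_one_add_log S
          have h2 : ((harmonic S : ℚ) : ℝ) = ∑ s ∈ Finset.range S, ((s : ℝ) + 1)⁻¹ := by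
            rw [harmonic]
            push_cast
            rfl
          rw [h2] at h1
          linarith
  -- final algebra
  have hS0 : (0 : ℝ) < S := by exact_mod_cast Nat.pos_of_ne_zero (by omega)
  have hlog : 0 ≤ Real.log S := Real.log_nonneg (by exact_mod_cast hS)
  have hLα : (L : ℝ) * α ≤ 1 := by
    rw [le_div_iff₀ hL] at hα; linarith
  set H : ℝ := Real.log S + 1 with hHdef
  have hHnn : 0 ≤ H := by simp [hHdef]; linarith
  have hT : (∑ s ∈ Finset.range S,
      ∫ ω, ‖(α)⁻¹ • (lam s ω - P (lam s ω - α • f' (lam s ω)))‖ ^ 2 ∂μ)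
      ≤ (1 / α) * (8 * Δ + (10 / L) * (C / c₃) * H) := by
    have h10 : 10 * (C / c₃ * H) ≤ (1 / α) * ((10 / L) * (C / c₃) * H) := by
      rw [← sub_nonneg]
      have e : (1 / α) * ((10 / L) * (C / c₃) * H) - 10 * (C / c₃ * H)
          = (1 - (L : ℝ) * α) * (10 * (C / c₃) * H) / (α * L) := by
        field_simp
      rw [e]
      apply div_nonneg _ (by positivity)
      apply mul_nonneg (by linarith)
      have : (0:ℝ) ≤ C / c₃ := by positivity
      nlinarith
    have e2 : (1 / α) * (8 * Δ + (10 / L) * (C / c₃) * H)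
        = 8 / α * Δ + (1 / α) * ((10 / L) * (C / c₃) * H) := by ring
    have h5 : 10 * ∑ s ∈ Finset.range S, ∫ ω, ‖g s ω - f' (lam s ω)‖ ^ 2 ∂μ
        ≤ 10 * (C / c₃ * H) := by
      apply mul_le_mul_of_nonneg_left hharm (by norm_num)
    linarith [hmain]
  have e3 : (1 / ((S : ℝ) * α)) * (8 * Δ + (10 / L) * (C / c₃) * H)
      = (1 / (S : ℝ)) * ((1 / α) * (8 * Δ + (10 / L) * (C / c₃) * H)) := by
    rw [one_div, mul_inv, one_div, one_div]
    ring
  rw [hΔdef] at e3 hT ⊢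
  rw [e3]
  exact mul_le_mul_of_nonneg_left hT (by positivity)
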